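/- Let p, p̃ ∈ [0,1] and let x = (x₁,x₂,u) and x̃ = (x̃₁,x̃₂,ũ) be configurations with p̃ ≤ p, x̃₁ ≤ x₁ and x̃₂ ≥ x₂. Then for all t ≥ 0, Pr[T₁(p,x) ≤ t] ≥ Pr[T₁(p̃,x̃) ≤ t], where T₁(p,x) denotes the first time s ≥ 0 at which X₁(s) = n for the chain USD_p started from x. -/

import Mathlib

set_option maxHeartbeats 1600000


open MeasureTheory

/-- The one-step transition probability of the stubborn undecided-state dynamics `USD_p`
with `n` agents, from configuration `c = (x₁, x₂, u)` to configuration `d`. -/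
noncomputable def usdStep (n : ℕ) (p : ℝ) (c d : ℕ × ℕ × ℕ) : ℝ :=
  (if d = (c.1 - 1, c.2.1, c.2.2 + 1) then (1 - p) * (c.1 : ℝ) * (c.2.1 : ℝ) / (n : ℝ) ^ 2 else 0) +
  (if d = (c.1, c.2.1 - 1, c.2.2 + 1) then (c.1 : ℝ) * (c.2.1 : ℝ) / (n : ℝ) ^ 2 else 0) +
  (if d = (c.1 + 1, c.2.1, c.2.2 - 1) then (c.2.2 : ℝ) * (c.1 : ℝ) / (n : ℝ) ^ 2 else 0) +
  (if d = (c.1, c.2.1 + 1, c.2.2 - 1) then (c.2.2 : ℝ) * (c.2.1 : ℝ) / (n : ℝ) ^ 2 else 0) +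
  (if d = c then
    1 - ((2 - p) * (c.1 : ℝ) * (c.2.1 : ℝ) + (c.2.2 : ℝ) * ((c.1 : ℝ) + (c.2.1 : ℝ))) / (n : ℝ) ^ 2
  else 0)

/-- `μ` is the law of the trajectory `(X(t))_{t ≥ 0}` of `USD_p` with `n` agents started
from the configuration `x0`: it is a probability measure on paths whose finite-dimensional
cylinder probabilities are the products of the one-step transition probabilities. -/
def IsUSD (n : ℕ) (p : ℝ) (x0 : ℕ × ℕ × ℕ) (μ : Measure (ℕ → ℕ × ℕ × ℕ)) : Prop :=
  IsProbabilityMeasure μ ∧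
  ∀ (t : ℕ) (seq : ℕ → ℕ × ℕ × ℕ),
    (μ {ω | ∀ i ≤ t, ω i = seq i}).toReal =
      (if seq 0 = x0 then (1 : ℝ) else 0) *
        ∏ i ∈ Finset.range t, usdStep n p (seq i) (seq (i + 1))

/-- The weighted bias `Δ_w = x₁ - (1 - p)·x₂` of a configuration. -/
noncomputable def dw (p : ℝ) (c : ℕ × ℕ × ℕ) : ℝ := (c.1 : ℝ) - (1 - p) * (c.2.1 : ℝ)

namespace USDAux

noncomputable def r5 (n : ℕ) (p : ℝ) (c : ℕ × ℕ × ℕ) : ℝ :=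
  1 - ((2 - p) * (c.1 : ℝ) * (c.2.1 : ℝ) + (c.2.2 : ℝ) * ((c.1 : ℝ) + (c.2.1 : ℝ))) / (n : ℝ) ^ 2

noncomputable def hfun (n : ℕ) (p : ℝ) : ℕ → ℕ × ℕ × ℕ → ℝ
  | 0, c => if c.1 = n then 1 else 0
  | (t+1), c => if c.1 = n then 1 else
      (1 - p) * (c.1 : ℝ) * (c.2.1 : ℝ) / (n : ℝ) ^ 2 * hfun n p t (c.1 - 1, c.2.1, c.2.2 + 1) +
      (c.1 : ℝ) * (c.2.1 : ℝ) / (n : ℝ) ^ 2 * hfun n p t (c.1, c.2.1 - 1, c.2.2 + 1) +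
      (c.2.2 : ℝ) * (c.1 : ℝ) / (n : ℝ) ^ 2 * hfun n p t (c.1 + 1, c.2.1, c.2.2 - 1) +
      (c.2.2 : ℝ) * (c.2.1 : ℝ) / (n : ℝ) ^ 2 * hfun n p t (c.1, c.2.1 + 1, c.2.2 - 1) +
      r5 n p c * hfun n p t c

lemma hfun_zero (n : ℕ) (p : ℝ) (c : ℕ × ℕ × ℕ) :
    hfun n p 0 c = if c.1 = n then 1 else 0 := rfl

lemma hfun_succ (n : ℕ) (p : ℝ) (t : ℕ) (c : ℕ × ℕ × ℕ) :
    hfun n p (t+1) c = if c.1 = n then 1 else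
      (1 - p) * (c.1 : ℝ) * (c.2.1 : ℝ) / (n : ℝ) ^ 2 * hfun n p t (c.1 - 1, c.2.1, c.2.2 + 1) +
      (c.1 : ℝ) * (c.2.1 : ℝ) / (n : ℝ) ^ 2 * hfun n p t (c.1, c.2.1 - 1, c.2.2 + 1) +
      (c.2.2 : ℝ) * (c.1 : ℝ) / (n : ℝ) ^ 2 * hfun n p t (c.1 + 1, c.2.1, c.2.2 - 1) +
      (c.2.2 : ℝ) * (c.2.1 : ℝ) / (n : ℝ) ^ 2 * hfun n p t (c.1, c.2.1 + 1, c.2.2 - 1) +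
      r5 n p c * hfun n p t c := rfl

section Rates

variable {n : ℕ} {p : ℝ}

lemma npos (hn : 2 ≤ n) : (0:ℝ) < (n:ℝ)^2 := by
  have : (0:ℝ) < (n:ℝ) := by exact_mod_cast Nat.lt_of_lt_of_le (by norm_num) hn
  positivity

lemma r5_nonneg (hn : 2 ≤ n) (hp0 : 0 ≤ p) (a b u : ℕ) (hc : a + b + u = n) :
    0 ≤ r5 n p (a, b, u) := by
  have hN : (n:ℝ) = (a:ℝ) + b + u := by exact_mod_cast hc.symm
  have h2 := npos hn
  unfold r5
  rw [sub_nonneg, div_le_one h2]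
  simp only
  rw [hN]
  have ha : (0:ℝ) ≤ a := Nat.cast_nonneg a
  have hb : (0:ℝ) ≤ b := Nat.cast_nonneg b
  have hu : (0:ℝ) ≤ u := Nat.cast_nonneg u
  nlinarith [mul_nonneg ha hb, mul_nonneg hu (add_nonneg ha hb)]

lemma rsum (hn : 2 ≤ n) (p : ℝ) (c : ℕ × ℕ × ℕ) :
    (1 - p) * (c.1 : ℝ) * (c.2.1 : ℝ) / (n : ℝ) ^ 2 +
    (c.1 : ℝ) * (c.2.1 : ℝ) / (n : ℝ) ^ 2 +
    (c.2.2 : ℝ) * (c.1 : ℝ) / (n : ℝ) ^ 2 +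
    (c.2.2 : ℝ) * (c.2.1 : ℝ) / (n : ℝ) ^ 2 + r5 n p c = 1 := by
  have h2 := (npos hn).ne'
  unfold r5
  field_simp
  ring

/-- bounds on hfun -/
lemma hfun_bounds (hn : 2 ≤ n) (hp0 : 0 ≤ p) (hp1 : p ≤ 1) :
    ∀ (t : ℕ) (a b u : ℕ), a + b + u = n →
      0 ≤ hfun n p t (a, b, u) ∧ hfun n p t (a, b, u) ≤ 1 := by
  intro t
  induction t with
  | zero =>
    intro a b u _
    rw [hfun_zero]
    split <;> norm_num
  | succ t ih =>
    intro a b u hc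
    rw [hfun_succ]
    split
    · norm_num
    have h2 := npos hn
    have hstay : 0 ≤ r5 n p (a, b, u) := r5_nonneg hn hp0 a b u hc
    -- per-term facts
    have ha : (0:ℝ) ≤ a := Nat.cast_nonneg a
    have hb : (0:ℝ) ≤ b := Nat.cast_nonneg b
    have hu : (0:ℝ) ≤ u := Nat.cast_nonneg u
    have hq : (0:ℝ) ≤ 1 - p := by linarith
    have r1n : 0 ≤ (1 - p) * (a : ℝ) * (b : ℝ) / (n : ℝ) ^ 2 := by positivity
    have r2n : 0 ≤ (a : ℝ) * (b : ℝ) / (n : ℝ) ^ 2 := by positivity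
    have r3n : 0 ≤ (u : ℝ) * (a : ℝ) / (n : ℝ) ^ 2 := by positivity
    have r4n : 0 ≤ (u : ℝ) * (b : ℝ) / (n : ℝ) ^ 2 := by positivity
    -- target values in [0,1] or coefficient zero
    have T1 : 0 ≤ hfun n p t (a - 1, b, u + 1) ∧ hfun n p t (a - 1, b, u + 1) ≤ 1 ∨ (a:ℝ) = 0 := by
      rcases Nat.eq_zero_or_pos a with h | h
      · right; simp [h]
      · left; exact ih (a-1) b (u+1) (by omega)
    have T2 : 0 ≤ hfun n p t (a, b - 1, u + 1) ∧ hfun n p t (a, b - 1, u + 1) ≤ 1 ∨ (b:ℝ) = 0 := by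
      rcases Nat.eq_zero_or_pos b with h | h
      · right; simp [h]
      · left; exact ih a (b-1) (u+1) (by omega)
    have T3 : 0 ≤ hfun n p t (a + 1, b, u - 1) ∧ hfun n p t (a + 1, b, u - 1) ≤ 1 ∨ (u:ℝ) = 0 := by
      rcases Nat.eq_zero_or_pos u with h | h
      · right; simp [h]
      · left; exact ih (a+1) b (u-1) (by omega)
    have T5 := ih a b u hc
    dsimp only at *
    have B1 : 0 ≤ (1 - p) * (a:ℝ) * (b:ℝ) / (n:ℝ)^2 * hfun n p t (a - 1, b, u + 1) ∧
        (1 - p) * (a:ℝ) * (b:ℝ) / (n:ℝ)^2 * hfun n p t (a - 1, b, u + 1) ≤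
          (1 - p) * (a:ℝ) * (b:ℝ) / (n:ℝ)^2 := by
      rcases T1 with ⟨l, r⟩ | h0
      · exact ⟨mul_nonneg r1n l, mul_le_of_le_one_right r1n r⟩
      · simp [h0]
    have B2 : 0 ≤ (a:ℝ) * (b:ℝ) / (n:ℝ)^2 * hfun n p t (a, b - 1, u + 1) ∧
        (a:ℝ) * (b:ℝ) / (n:ℝ)^2 * hfun n p t (a, b - 1, u + 1) ≤ (a:ℝ) * (b:ℝ) / (n:ℝ)^2 := by
      rcases T2 with ⟨l, r⟩ | h0
      · exact ⟨mul_nonneg r2n l, mul_le_of_le_one_right r2n r⟩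
      · simp [h0]
    have B3 : 0 ≤ (u:ℝ) * (a:ℝ) / (n:ℝ)^2 * hfun n p t (a + 1, b, u - 1) ∧
        (u:ℝ) * (a:ℝ) / (n:ℝ)^2 * hfun n p t (a + 1, b, u - 1) ≤ (u:ℝ) * (a:ℝ) / (n:ℝ)^2 := by
      rcases T3 with ⟨l, r⟩ | h0
      · exact ⟨mul_nonneg r3n l, mul_le_of_le_one_right r3n r⟩
      · simp [h0]
    have B4 : 0 ≤ (u:ℝ) * (b:ℝ) / (n:ℝ)^2 * hfun n p t (a, b + 1, u - 1) ∧
        (u:ℝ) * (b:ℝ) / (n:ℝ)^2 * hfun n p t (a, b + 1, u - 1) ≤ (u:ℝ) * (b:ℝ) / (n:ℝ)^2 := by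
      rcases Nat.eq_zero_or_pos u with h | h
      · constructor <;> simp [h]
      · obtain ⟨l, r⟩ := ih a (b+1) (u-1) (by omega)
        exact ⟨mul_nonneg r4n l, mul_le_of_le_one_right r4n r⟩
    have B5 : 0 ≤ r5 n p (a, b, u) * hfun n p t (a, b, u) ∧
        r5 n p (a, b, u) * hfun n p t (a, b, u) ≤ r5 n p (a, b, u) :=
      ⟨mul_nonneg hstay T5.1, mul_le_of_le_one_right hstay T5.2⟩
    have hsum := rsum hn p (a, b, u)
    dsimp only at hsum
    constructor
    · linarith [B1.1, B2.1, B3.1, B4.1, B5.1]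
    · linarith [B1.2, B2.2, B3.2, B4.2, B5.2]

/-- monotonicity w.r.t. the partial order, derived from single steps -/
lemma chain_of (t : ℕ)
    (hB : ∀ a b u, a + 1 + b + u = n → hfun n p t (a, b, u+1) ≤ hfun n p t (a+1, b, u))
    (hC : ∀ a b u, a + b + 1 + u = n → hfun n p t (a, b+1, u) ≤ hfun n p t (a, b, u+1)) :
    ∀ a b u a' b' u', a + b + u = n → a' + b' + u' = n → a' ≤ a → b ≤ b' →
      hfun n p t (a', b', u') ≤ hfun n p t (a, b, u) := by
  intro a b u
  suffices H : ∀ k a' b' u', a' + b' + u' = n → a' ≤ a → b ≤ b' →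
      (a - a') + (b' - b) = k → a + b + u = n → hfun n p t (a', b', u') ≤ hfun n p t (a, b, u) by
    intro a' b' u' h1 h2 h3 h4
    exact H _ a' b' u' h2 h3 h4 rfl h1
  intro k
  induction k with
  | zero =>
    intro a' b' u' h1 h2 h3 h4 h5
    have : a' = a ∧ b' = b ∧ u' = u := by omega
    obtain ⟨rfl, rfl, rfl⟩ := this
    exact le_rfl
  | succ k ih =>
    intro a' b' u' h1 h2 h3 h4 h5
    by_cases hbb : b < b'
    · obtain ⟨b'', rfl⟩ : ∃ m, b' = m + 1 := ⟨b' - 1, by omega⟩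
      calc hfun n p t (a', b'' + 1, u') ≤ hfun n p t (a', b'', u' + 1) := hC a' b'' u' (by omega)
        _ ≤ hfun n p t (a, b, u) := ih a' b'' (u'+1) (by omega) h2 (by omega) (by omega) h5
    · have haa : a' < a := by omega
      obtain ⟨u'', rfl⟩ : ∃ m, u' = m + 1 := ⟨u' - 1, by omega⟩
      calc hfun n p t (a', b', u'' + 1) ≤ hfun n p t (a' + 1, b', u'') := hB a' b' u'' (by omega)
        _ ≤ hfun n p t (a, b, u) := ih (a'+1) b' u'' (by omega) (by omega) h3 (by omega) h5

lemma BC (hn : 2 ≤ n) (hp0 : 0 ≤ p) (hp1 : p ≤ 1) : ∀ t : ℕ,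
    (∀ a b u, a + 1 + b + u = n → hfun n p t (a, b, u+1) ≤ hfun n p t (a+1, b, u)) ∧
    (∀ a b u, a + b + 1 + u = n → hfun n p t (a, b+1, u) ≤ hfun n p t (a, b, u+1)) := by
  intro t
  induction t with
  | zero =>
    constructor
    · intro a b u hsum
      have ha : ¬ (a = n) := by omega
      rw [hfun_zero, hfun_zero]
      dsimp only
      rw [if_neg ha]
      split <;> norm_num
    · intro a b u hsum
      have ha : ¬ (a = n) := by omega
      rw [hfun_zero, hfun_zero]
  | succ t ih =>
    have mono := chain_of (n := n) (p := p) t ih.1 ih.2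
    have ca : (0:ℝ) ≤ 1 - p := by linarith
    constructor
    · -- B step
      intro a b u hsum
      by_cases hz : a + 1 = n
      · calc hfun n p (t+1) (a, b, u+1) ≤ 1 :=
              (hfun_bounds hn hp0 hp1 (t+1) a b (u+1) (by omega)).2
          _ = hfun n p (t+1) (a+1, b, u) := by
              rw [hfun_succ]; dsimp only; rw [if_pos hz]
      · have ha : ¬ (a = n) := by omega
        rw [hfun_succ, hfun_succ]
        dsimp only
        rw [if_neg ha, if_neg hz]
        simp only [r5, Nat.add_sub_cancel]
        push_cast
        have hNr : (n:ℝ) = ↑a + ↑b + ↑u + 1 := by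
          exact_mod_cast (by omega : n = a + b + u + 1)
        have hden : (0:ℝ) < ((a:ℝ) + ↑b + ↑u + 1)^2 := by positivity
        have M1 := mono a b (u+1) (a-1) b (u+1+1)
        have M2 := mono (a+1) b u a b (u+1) (by omega) (by omega) (by omega) le_rfl
        have M3 := mono a b (u+1) a (b+1) u (by omega) (by omega) le_rfl (by omega)
        have M4 := mono (a+1) b u a (b+1) u (by omega) (by omega) (by omega) (by omega)
        have M5 := mono (a+1) (b-1) (u+1) a (b-1) (u+1+1)
        have M6 := mono (a+1) (b-1) (u+1) a b (u+1)
        have M7 := mono (a+1+1) b (u-1) (a+1) b u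
        have M8 := mono (a+1+1) b (u-1) a b (u+1)
        have M9 := mono (a+1) (b+1) (u-1) a (b+1) u
        generalize hA1 : hfun n p t (a - 1, b, u + 1 + 1) = A1 at *
        generalize hA2 : hfun n p t (a, b - 1, u + 1 + 1) = A2 at *
        generalize hA3 : hfun n p t (a + 1, b, u) = A3 at *
        generalize hA4 : hfun n p t (a, b + 1, u) = A4 at *
        generalize hA5 : hfun n p t (a, b, u + 1) = A5 at *
        generalize hB2 : hfun n p t (a + 1, b - 1, u + 1) = B2 at *
        generalize hB3 : hfun n p t (a + 1 + 1, b, u - 1) = B3 at *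
        generalize hB4 : hfun n p t (a + 1, b + 1, u - 1) = B4 at *
        set w0 : ℝ := ((a:ℝ) + ↑b + ↑u + 1)^2 -
          (2*(a:ℝ)*↑b + 2*↑b + ↑a + ↑u + ↑u*((a:ℝ)+↑b)) with hw0d
        have ca' : (0:ℝ) ≤ (a:ℝ) := Nat.cast_nonneg a
        have cb' : (0:ℝ) ≤ (b:ℝ) := Nat.cast_nonneg b
        have cu' : (0:ℝ) ≤ (u:ℝ) := Nat.cast_nonneg u
        have hw0 : 0 ≤ w0 := by
          rw [hw0d]
          nlinarith [mul_nonneg ca' cb', mul_nonneg ca' cu', mul_nonneg cb' cu',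
            sq_nonneg ((a:ℝ)), sq_nonneg ((b:ℝ)), sq_nonneg ((u:ℝ))]
        have F1 : 0 ≤ (1-p)*(a:ℝ)*↑b*(A5 - A1) := by
          rcases Nat.eq_zero_or_pos a with h | h
          · simp [h]
          · have hm := M1 (by omega) (by omega) (by omega) le_rfl
            have h6 : (0:ℝ) ≤ A5 - A1 := by linarith
            positivity
        have F2 : 0 ≤ (p*(a:ℝ)*↑b + w0)*(A3 - A5) := by
          have h6 : (0:ℝ) ≤ A3 - A5 := by linarith [M2]
          have h7 : (0:ℝ) ≤ p*(a:ℝ)*↑b + w0 := by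
            have : (0:ℝ) ≤ p*(a:ℝ)*↑b := by positivity
            linarith
          positivity
        have F3 : 0 ≤ (1-p)*(b:ℝ)*(A5 - A4) := by
          have h6 : (0:ℝ) ≤ A5 - A4 := by linarith [M3]
          positivity
        have F4 : 0 ≤ p*(b:ℝ)*(A3 - A4) := by
          have h6 : (0:ℝ) ≤ A3 - A4 := by linarith [M4]
          positivity
        have F5 : 0 ≤ (a:ℝ)*↑b*(B2 - A2) := by
          rcases Nat.eq_zero_or_pos b with h | h
          · simp [h]
          · have hm := M5 (by omega) (by omega) (by omega) le_rfl
            have h6 : (0:ℝ) ≤ B2 - A2 := by linarith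
            positivity
        have F6 : 0 ≤ (b:ℝ)*(B2 - A5) := by
          rcases Nat.eq_zero_or_pos b with h | h
          · simp [h]
          · have hm := M6 (by omega) (by omega) (by omega) (by omega)
            have h6 : (0:ℝ) ≤ B2 - A5 := by linarith
            positivity
        have F7 : 0 ≤ (u:ℝ)*(a:ℝ)*(B3 - A3) := by
          rcases Nat.eq_zero_or_pos u with h | h
          · simp [h]
          · have hm := M7 (by omega) (by omega) (by omega) le_rfl
            have h6 : (0:ℝ) ≤ B3 - A3 := by linarith
            positivity
        have F8 : 0 ≤ (u:ℝ)*(B3 - A5) := by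
          rcases Nat.eq_zero_or_pos u with h | h
          · simp [h]
          · have hm := M8 (by omega) (by omega) (by omega) le_rfl
            have h6 : (0:ℝ) ≤ B3 - A5 := by linarith
            positivity
        have F9 : 0 ≤ (u:ℝ)*(b:ℝ)*(B4 - A4) := by
          rcases Nat.eq_zero_or_pos u with h | h
          · simp [h]
          · have hm := M9 (by omega) (by omega) (by omega) le_rfl
            have h6 : (0:ℝ) ≤ B4 - A4 := by linarith
            positivity
        have key :
            ((1 - p) * ((a:ℝ)+1) * ↑b / (n:ℝ)^2 * A5 + ((a:ℝ)+1) * ↑b / (n:ℝ)^2 * B2 +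
              (u:ℝ) * ((a:ℝ)+1) / (n:ℝ)^2 * B3 + (u:ℝ) * ↑b / (n:ℝ)^2 * B4 +
              (1 - ((2 - p) * ((a:ℝ)+1) * ↑b + (u:ℝ) * (((a:ℝ)+1) + ↑b)) / (n:ℝ)^2) * A3) -
            ((1 - p) * (a:ℝ) * ↑b / (n:ℝ)^2 * A1 + (a:ℝ) * ↑b / (n:ℝ)^2 * A2 +
              ((u:ℝ)+1) * (a:ℝ) / (n:ℝ)^2 * A3 + ((u:ℝ)+1) * ↑b / (n:ℝ)^2 * A4 +
              (1 - ((2 - p) * (a:ℝ) * ↑b + ((u:ℝ)+1) * ((a:ℝ) + ↑b)) / (n:ℝ)^2) * A5) =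
            ((1-p)*(a:ℝ)*↑b*(A5 - A1) + (p*(a:ℝ)*↑b + w0)*(A3 - A5) + (1-p)*(b:ℝ)*(A5 - A4) +
              p*(b:ℝ)*(A3 - A4) + (a:ℝ)*↑b*(B2 - A2) + (b:ℝ)*(B2 - A5) +
              (u:ℝ)*(a:ℝ)*(B3 - A3) + (u:ℝ)*(B3 - A5) + (u:ℝ)*(b:ℝ)*(B4 - A4)) /
              (((a:ℝ) + ↑b + ↑u + 1)^2) := by
          rw [hNr, hw0d]
          field_simp
          ring
        have hQ : (0:ℝ) ≤
            ((1-p)*(a:ℝ)*↑b*(A5 - A1) + (p*(a:ℝ)*↑b + w0)*(A3 - A5) + (1-p)*(b:ℝ)*(A5 - A4) +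
              p*(b:ℝ)*(A3 - A4) + (a:ℝ)*↑b*(B2 - A2) + (b:ℝ)*(B2 - A5) +
              (u:ℝ)*(a:ℝ)*(B3 - A3) + (u:ℝ)*(B3 - A5) + (u:ℝ)*(b:ℝ)*(B4 - A4)) /
              (((a:ℝ) + ↑b + ↑u + 1)^2) := by
          apply div_nonneg _ hden.le
          linarith
        linarith [key, hQ]
    · -- C step
      intro a b u hsum
      have ha : ¬ (a = n) := by omega
      rw [hfun_succ, hfun_succ]
      dsimp only
      rw [if_neg ha, if_neg ha]
      simp only [r5, Nat.add_sub_cancel]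
      push_cast
      have hNr : (n:ℝ) = ↑a + ↑b + ↑u + 1 := by
        exact_mod_cast (by omega : n = a + b + u + 1)
      have hden : (0:ℝ) < ((a:ℝ) + ↑b + ↑u + 1)^2 := by positivity
      have M1 := mono (a-1) b (u+1+1) (a-1) (b+1) (u+1)
      have M2 := mono a b (u+1) a (b+1) u (by omega) (by omega) le_rfl (by omega)
      have M3 := mono a b (u+1) (a-1) (b+1) (u+1)
      have M4 := mono a (b-1) (u+1+1) a b (u+1)
      have M5 := mono (a+1) b u a b (u+1) (by omega) (by omega) (by omega) le_rfl
      have M6 := mono (a+1) b u (a+1) (b+1) (u-1)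
      have M7 := mono a (b+1) u a (b+1+1) (u-1)
      have M8 := mono a b (u+1) a (b+1+1) (u-1)
      generalize hA1 : hfun n p t (a - 1, b + 1, u + 1) = A1 at *
      generalize hZ : hfun n p t (a, b, u + 1) = Z at *
      generalize hA3 : hfun n p t (a + 1, b + 1, u - 1) = A3 at *
      generalize hA4 : hfun n p t (a, b + 1 + 1, u - 1) = A4 at *
      generalize hY : hfun n p t (a, b + 1, u) = Y at *
      generalize hB1 : hfun n p t (a - 1, b, u + 1 + 1) = B1 at *
      generalize hB2 : hfun n p t (a, b - 1, u + 1 + 1) = B2 at *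
      generalize hB3 : hfun n p t (a + 1, b, u) = B3 at *
      set w0 : ℝ := ((a:ℝ) + ↑b + ↑u + 1)^2 -
        (2*(a:ℝ)*↑b + 2*↑a + ↑b + ↑u + ↑u*((a:ℝ)+↑b)) with hw0d
      have ca' : (0:ℝ) ≤ (a:ℝ) := Nat.cast_nonneg a
      have cb' : (0:ℝ) ≤ (b:ℝ) := Nat.cast_nonneg b
      have cu' : (0:ℝ) ≤ (u:ℝ) := Nat.cast_nonneg u
      have hw0 : 0 ≤ w0 := by
        rw [hw0d]
        nlinarith [mul_nonneg ca' cb', mul_nonneg ca' cu', mul_nonneg cb' cu',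
          sq_nonneg ((a:ℝ)), sq_nonneg ((b:ℝ)), sq_nonneg ((u:ℝ))]
      have G1 : 0 ≤ (1-p)*(a:ℝ)*↑b*(B1 - A1) := by
        rcases Nat.eq_zero_or_pos a with h | h
        · simp [h]
        · have hm := M1 (by omega) (by omega) le_rfl (by omega)
          have h6 : (0:ℝ) ≤ B1 - A1 := by linarith
          positivity
      have G2 : 0 ≤ (p*(a:ℝ)*↑b + p*(a:ℝ) + w0)*(Z - Y) := by
        have h6 : (0:ℝ) ≤ Z - Y := by linarith [M2]
        have h7 : (0:ℝ) ≤ p*(a:ℝ)*↑b + p*(a:ℝ) + w0 := by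
          have h8 : (0:ℝ) ≤ p*(a:ℝ)*↑b := by positivity
          have h9 : (0:ℝ) ≤ p*(a:ℝ) := by positivity
          linarith
        positivity
      have G3 : 0 ≤ (1-p)*(a:ℝ)*(Z - A1) := by
        rcases Nat.eq_zero_or_pos a with h | h
        · simp [h]
        · have hm := M3 (by omega) (by omega) (by omega) (by omega)
          have h6 : (0:ℝ) ≤ Z - A1 := by linarith
          positivity
      have G4 : 0 ≤ (a:ℝ)*↑b*(B2 - Z) := by
        rcases Nat.eq_zero_or_pos b with h | h
        · simp [h]
        · have hm := M4 (by omega) (by omega) le_rfl (by omega)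
          have h6 : (0:ℝ) ≤ B2 - Z := by linarith
          positivity
      have G5 : 0 ≤ (a:ℝ)*(B3 - Z) := by
        have h6 : (0:ℝ) ≤ B3 - Z := by linarith [M5]
        positivity
      have G6 : 0 ≤ (u:ℝ)*(a:ℝ)*(B3 - A3) := by
        rcases Nat.eq_zero_or_pos u with h | h
        · simp [h]
        · have hm := M6 (by omega) (by omega) le_rfl (by omega)
          have h6 : (0:ℝ) ≤ B3 - A3 := by linarith
          positivity
      have G7 : 0 ≤ (u:ℝ)*(b:ℝ)*(Y - A4) := by
        rcases Nat.eq_zero_or_pos u with h | h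
        · simp [h]
        · have hm := M7 (by omega) (by omega) le_rfl (by omega)
          have h6 : (0:ℝ) ≤ Y - A4 := by linarith
          positivity
      have G8 : 0 ≤ (u:ℝ)*(Z - A4) := by
        rcases Nat.eq_zero_or_pos u with h | h
        · simp [h]
        · have hm := M8 (by omega) (by omega) le_rfl (by omega)
          have h6 : (0:ℝ) ≤ Z - A4 := by linarith
          positivity
      have key :
          ((1 - p) * (a:ℝ) * ↑b / (n:ℝ)^2 * B1 + (a:ℝ) * ↑b / (n:ℝ)^2 * B2 +
            ((u:ℝ)+1) * (a:ℝ) / (n:ℝ)^2 * B3 + ((u:ℝ)+1) * ↑b / (n:ℝ)^2 * Y +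
            (1 - ((2 - p) * (a:ℝ) * ↑b + ((u:ℝ)+1) * ((a:ℝ) + ↑b)) / (n:ℝ)^2) * Z) -
          ((1 - p) * (a:ℝ) * (↑b+1) / (n:ℝ)^2 * A1 + (a:ℝ) * ((b:ℝ)+1) / (n:ℝ)^2 * Z +
            (u:ℝ) * (a:ℝ) / (n:ℝ)^2 * A3 + (u:ℝ) * ((b:ℝ)+1) / (n:ℝ)^2 * A4 +
            (1 - ((2 - p) * (a:ℝ) * ((b:ℝ)+1) + (u:ℝ) * ((a:ℝ) + (↑b+1))) / (n:ℝ)^2) * Y) =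
          ((1-p)*(a:ℝ)*↑b*(B1 - A1) + (p*(a:ℝ)*↑b + p*(a:ℝ) + w0)*(Z - Y) +
            (1-p)*(a:ℝ)*(Z - A1) + (a:ℝ)*↑b*(B2 - Z) + (a:ℝ)*(B3 - Z) +
            (u:ℝ)*(a:ℝ)*(B3 - A3) + (u:ℝ)*(b:ℝ)*(Y - A4) + (u:ℝ)*(Z - A4)) /
            (((a:ℝ) + ↑b + ↑u + 1)^2) := by
        rw [hNr, hw0d]
        field_simp
        ring
      have hQ : (0:ℝ) ≤
          ((1-p)*(a:ℝ)*↑b*(B1 - A1) + (p*(a:ℝ)*↑b + p*(a:ℝ) + w0)*(Z - Y) +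
            (1-p)*(a:ℝ)*(Z - A1) + (a:ℝ)*↑b*(B2 - Z) + (a:ℝ)*(B3 - Z) +
            (u:ℝ)*(a:ℝ)*(B3 - A3) + (u:ℝ)*(b:ℝ)*(Y - A4) + (u:ℝ)*(Z - A4)) /
            (((a:ℝ) + ↑b + ↑u + 1)^2) := by
        apply div_nonneg _ hden.le
        linarith
      linarith [key, hQ]

lemma hfun_p_mono (hn : 2 ≤ n) (pt : ℝ) (hpt0 : 0 ≤ pt) (hple : pt ≤ p) (hp1 : p ≤ 1) :
    ∀ t a b u, a + b + u = n → hfun n pt t (a, b, u) ≤ hfun n p t (a, b, u) := by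
  have hpt1 : pt ≤ 1 := le_trans hple hp1
  have monopt := fun t => chain_of (n := n) (p := pt) t (BC hn hpt0 hpt1 t).1 (BC hn hpt0 hpt1 t).2
  intro t
  induction t with
  | zero => intro a b u _; rw [hfun_zero, hfun_zero]
  | succ t ih =>
    intro a b u hc
    by_cases han : a = n
    · rw [hfun_succ, hfun_succ]
      dsimp only
      rw [if_pos han, if_pos han]
    · rw [hfun_succ, hfun_succ]
      dsimp only
      rw [if_neg han, if_neg han]
      simp only [r5]
      push_cast
      have hNr : (n:ℝ) = ↑a + ↑b + ↑u := by
        exact_mod_cast (by omega : n = a + b + u)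
      have hpos : (0:ℝ) < (a:ℝ) + ↑b + ↑u := by
        have h0 : 0 < a + b + u := by omega
        exact_mod_cast h0
      have hden : (0:ℝ) < ((a:ℝ) + ↑b + ↑u)^2 := by positivity
      have I1 := ih (a-1) b (u+1)
      have I2 := ih a (b-1) (u+1)
      have I3 := ih (a+1) b (u-1)
      have I4 := ih a (b+1) (u-1)
      have I5 := ih a b u hc
      have MP := monopt t a b u (a-1) b (u+1)
      generalize hH1 : hfun n p t (a - 1, b, u + 1) = H1 at *
      generalize hH2 : hfun n p t (a, b - 1, u + 1) = H2 at *
      generalize hH3 : hfun n p t (a + 1, b, u - 1) = H3 at *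
      generalize hH4 : hfun n p t (a, b + 1, u - 1) = H4 at *
      generalize hH5 : hfun n p t (a, b, u) = H5 at *
      generalize hG1 : hfun n pt t (a - 1, b, u + 1) = G1 at *
      generalize hG2 : hfun n pt t (a, b - 1, u + 1) = G2 at *
      generalize hG3 : hfun n pt t (a + 1, b, u - 1) = G3 at *
      generalize hG4 : hfun n pt t (a, b + 1, u - 1) = G4 at *
      generalize hG5 : hfun n pt t (a, b, u) = G5 at *
      have ca' : (0:ℝ) ≤ (a:ℝ) := Nat.cast_nonneg a
      have cb' : (0:ℝ) ≤ (b:ℝ) := Nat.cast_nonneg b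
      have cu' : (0:ℝ) ≤ (u:ℝ) := Nat.cast_nonneg u
      set w0 : ℝ := ((a:ℝ) + ↑b + ↑u)^2 - ((2-pt)*(a:ℝ)*↑b + ↑u*((a:ℝ)+↑b)) with hw0d
      have hw0 : 0 ≤ w0 := by
        rw [hw0d]
        nlinarith [mul_nonneg ca' cb', mul_nonneg ca' cu', mul_nonneg cb' cu',
          sq_nonneg ((a:ℝ)), sq_nonneg ((b:ℝ)), sq_nonneg ((u:ℝ)),
          mul_nonneg (mul_nonneg hpt0 ca') cb']
      have K1 : 0 ≤ (1-p)*(a:ℝ)*↑b*(H1 - G1) := by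
        rcases Nat.eq_zero_or_pos a with h | h
        · simp [h]
        · have hm := I1 (by omega)
          have h6 : (0:ℝ) ≤ H1 - G1 := by linarith
          have h7 : (0:ℝ) ≤ 1 - p := by linarith
          positivity
      have K2 : 0 ≤ (a:ℝ)*↑b*(H2 - G2) := by
        rcases Nat.eq_zero_or_pos b with h | h
        · simp [h]
        · have hm := I2 (by omega)
          have h6 : (0:ℝ) ≤ H2 - G2 := by linarith
          positivity
      have K3 : 0 ≤ (u:ℝ)*(a:ℝ)*(H3 - G3) := by
        rcases Nat.eq_zero_or_pos u with h | h
        · simp [h]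
        · have hm := I3 (by omega)
          have h6 : (0:ℝ) ≤ H3 - G3 := by linarith
          positivity
      have K4 : 0 ≤ (u:ℝ)*(b:ℝ)*(H4 - G4) := by
        rcases Nat.eq_zero_or_pos u with h | h
        · simp [h]
        · have hm := I4 (by omega)
          have h6 : (0:ℝ) ≤ H4 - G4 := by linarith
          positivity
      have K5 : 0 ≤ (p - pt)*(a:ℝ)*↑b*(H5 - G1) := by
        rcases Nat.eq_zero_or_pos a with h | h
        · simp [h]
        · have hm := MP (by omega) (by omega) (by omega) le_rfl
          have h6 : (0:ℝ) ≤ H5 - G1 := by linarith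
          have h7 : (0:ℝ) ≤ p - pt := by linarith
          positivity
      have K6 : 0 ≤ w0*(H5 - G5) := by
        have h6 : (0:ℝ) ≤ H5 - G5 := by linarith
        positivity
      have key :
          ((1 - p) * (a:ℝ) * ↑b / (n:ℝ)^2 * H1 + (a:ℝ) * ↑b / (n:ℝ)^2 * H2 +
            (u:ℝ) * (a:ℝ) / (n:ℝ)^2 * H3 + (u:ℝ) * ↑b / (n:ℝ)^2 * H4 +
            (1 - ((2 - p) * (a:ℝ) * ↑b + (u:ℝ) * ((a:ℝ) + ↑b)) / (n:ℝ)^2) * H5) -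
          ((1 - pt) * (a:ℝ) * ↑b / (n:ℝ)^2 * G1 + (a:ℝ) * ↑b / (n:ℝ)^2 * G2 +
            (u:ℝ) * (a:ℝ) / (n:ℝ)^2 * G3 + (u:ℝ) * ↑b / (n:ℝ)^2 * G4 +
            (1 - ((2 - pt) * (a:ℝ) * ↑b + (u:ℝ) * ((a:ℝ) + ↑b)) / (n:ℝ)^2) * G5) =
          ((1-p)*(a:ℝ)*↑b*(H1 - G1) + (a:ℝ)*↑b*(H2 - G2) + (u:ℝ)*(a:ℝ)*(H3 - G3) +
            (u:ℝ)*(b:ℝ)*(H4 - G4) + (p - pt)*(a:ℝ)*↑b*(H5 - G1) + w0*(H5 - G5)) /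
            (((a:ℝ) + ↑b + ↑u)^2) := by
        rw [hNr, hw0d]
        field_simp
        ring
      have hQ : (0:ℝ) ≤
          ((1-p)*(a:ℝ)*↑b*(H1 - G1) + (a:ℝ)*↑b*(H2 - G2) + (u:ℝ)*(a:ℝ)*(H3 - G3) +
            (u:ℝ)*(b:ℝ)*(H4 - G4) + (p - pt)*(a:ℝ)*↑b*(H5 - G1) + w0*(H5 - G5)) /
            (((a:ℝ) + ↑b + ↑u)^2) := by
        apply div_nonneg _ hden.le
        linarith
      linarith [key, hQ]

end Rates

/-- full monotonicity of the hitting function -/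
lemma hfun_mono {n : ℕ} {p pt : ℝ} (hn : 2 ≤ n) (hp0 : 0 ≤ p) (hp1 : p ≤ 1)
    (hpt0 : 0 ≤ pt) (hple : pt ≤ p) (x xt : ℕ × ℕ × ℕ)
    (hx : x.1 + x.2.1 + x.2.2 = n) (hxt : xt.1 + xt.2.1 + xt.2.2 = n)
    (h1 : xt.1 ≤ x.1) (h2 : x.2.1 ≤ xt.2.1) (t : ℕ) :
    hfun n pt t xt ≤ hfun n p t x := by
  obtain ⟨a, b, u⟩ := x
  obtain ⟨a', b', u'⟩ := xt
  calc hfun n pt t (a', b', u') ≤ hfun n p t (a', b', u') :=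
        hfun_p_mono hn pt hpt0 hple hp1 t a' b' u' hxt
    _ ≤ hfun n p t (a, b, u) :=
        chain_of t (BC hn hp0 hp1 t).1 (BC hn hp0 hp1 t).2 a b u a' b' u' hx hxt h1 h2


section Paths

open scoped ENNReal
open Classical in
noncomputable def wprod (n : ℕ) (p : ℝ) (t : ℕ) (seq : ℕ → ℕ × ℕ × ℕ) : ℝ :=
  ∏ i ∈ Finset.range t, usdStep n p (seq i) (seq (i + 1))

noncomputable def wseq (n : ℕ) (p : ℝ) (c : ℕ × ℕ × ℕ) (t : ℕ) (seq : ℕ → ℕ × ℕ × ℕ) : ℝ :=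
  (if seq 0 = c then (1 : ℝ) else 0) * wprod n p t seq

def ext' (t : ℕ) (v : Fin (t+1) → ℕ × ℕ × ℕ) : ℕ → ℕ × ℕ × ℕ :=
  fun i => v ⟨min i t, by omega⟩

lemma ext'_le {t : ℕ} {v : Fin (t+1) → ℕ × ℕ × ℕ} {i : ℕ} (h : i ≤ t) :
    ext' t v i = v ⟨i, by omega⟩ := by
  unfold ext'
  congr 1
  exact Fin.ext (by simp [Nat.min_eq_left h])

lemma ext'_fin {t : ℕ} {v : Fin (t+1) → ℕ × ℕ × ℕ} (i : Fin (t+1)) :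
    ext' t v i.val = v i := by
  rw [ext'_le (by omega)]

lemma ext'_zero {t : ℕ} {v : Fin (t+1) → ℕ × ℕ × ℕ} : ext' t v 0 = v 0 := by
  have := ext'_fin (v := v) (0 : Fin (t+1))
  simpa using this

lemma ext'_succ {t : ℕ} (v : Fin (t+2) → ℕ × ℕ × ℕ) (i : ℕ) :
    ext' (t+1) v (i+1) = ext' t (fun j => v j.succ) i := by
  unfold ext'
  simp only
  congr 1
  exact Fin.ext (by simp [Nat.succ_min_succ])

def HitF (n t : ℕ) (v : Fin (t+1) → ℕ × ℕ × ℕ) : Prop := ∃ i, (v i).1 = n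

lemma hitF_cons {n t : ℕ} (s0 : ℕ × ℕ × ℕ) (v' : Fin (t+1) → ℕ × ℕ × ℕ) :
    HitF n (t+1) (Fin.cons s0 v') ↔ s0.1 = n ∨ HitF n t v' := by
  constructor
  · rintro ⟨i, hi⟩
    induction i using Fin.cases with
    | zero => left; rwa [Fin.cons_zero] at hi
    | succ j => right; exact ⟨j, by rwa [Fin.cons_succ] at hi⟩
  · rintro (h | ⟨j, hj⟩)
    · exact ⟨0, by simpa using h⟩
    · exact ⟨j.succ, by simpa [Fin.cons_succ] using hj⟩

variable {n : ℕ} {p : ℝ}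

lemma usdStep_nonneg (hn : 2 ≤ n) (hp0 : 0 ≤ p) (hp1 : p ≤ 1) {c : ℕ × ℕ × ℕ}
    (hc : c.1 + c.2.1 + c.2.2 = n) (d : ℕ × ℕ × ℕ) : 0 ≤ usdStep n p c d := by
  obtain ⟨a, b, u⟩ := c
  dsimp only at hc
  have h2 := npos hn
  have hq : (0:ℝ) ≤ 1 - p := by linarith
  have hr5 := r5_nonneg hn hp0 a b u hc
  unfold r5 at hr5
  unfold usdStep
  dsimp only
  have t1 : (0:ℝ) ≤ (1 - p) * (a:ℝ) * (b:ℝ) / (n:ℝ)^2 := by positivity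
  have t2 : (0:ℝ) ≤ (a:ℝ) * (b:ℝ) / (n:ℝ)^2 := by positivity
  have t3 : (0:ℝ) ≤ (u:ℝ) * (a:ℝ) / (n:ℝ)^2 := by positivity
  have t4 : (0:ℝ) ≤ (u:ℝ) * (b:ℝ) / (n:ℝ)^2 := by positivity
  have T : ∀ (P : Prop) [Decidable P] (x : ℝ), 0 ≤ x → 0 ≤ (if P then x else 0) := by
    intro P _ x hx; split <;> simp [hx]
  have := T (d = ((a:ℕ) - 1, b, u + 1)) _ t1
  positivity

lemma usdStep_zero_invalid (hp0 : 0 ≤ p) {c d : ℕ × ℕ × ℕ}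
    (hc : c.1 + c.2.1 + c.2.2 = n) (hd : d.1 + d.2.1 + d.2.2 ≠ n) :
    usdStep n p c d = 0 := by
  obtain ⟨a, b, u⟩ := c
  obtain ⟨d1, d2, d3⟩ := d
  dsimp only at hc hd
  unfold usdStep
  dsimp only
  have e1 : (if (d1, d2, d3) = ((a:ℕ) - 1, b, u + 1)
      then (1 - p) * (a:ℝ) * (b:ℝ) / (n:ℝ)^2 else 0) = 0 := by
    split
    · rcases Nat.eq_zero_or_pos a with h | h
      · simp [h]
      · rename_i heq
        simp only [Prod.mk.injEq] at heq
        omega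
    · rfl
  have e2 : (if (d1, d2, d3) = ((a:ℕ), b - 1, u + 1)
      then (a:ℝ) * (b:ℝ) / (n:ℝ)^2 else 0) = 0 := by
    split
    · rcases Nat.eq_zero_or_pos b with h | h
      · simp [h]
      · rename_i heq
        simp only [Prod.mk.injEq] at heq
        omega
    · rfl
  have e3 : (if (d1, d2, d3) = ((a:ℕ) + 1, b, u - 1)
      then (u:ℝ) * (a:ℝ) / (n:ℝ)^2 else 0) = 0 := by
    split
    · rcases Nat.eq_zero_or_pos u with h | h
      · simp [h]
      · rename_i heq
        simp only [Prod.mk.injEq] at heq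
        omega
    · rfl
  have e4 : (if (d1, d2, d3) = ((a:ℕ), b + 1, u - 1)
      then (u:ℝ) * (b:ℝ) / (n:ℝ)^2 else 0) = 0 := by
    split
    · rcases Nat.eq_zero_or_pos u with h | h
      · simp [h]
      · rename_i heq
        simp only [Prod.mk.injEq] at heq
        omega
    · rfl
  have e5 : (if (d1, d2, d3) = ((a:ℕ), b, u) then
      1 - ((2 - p) * (a:ℝ) * (b:ℝ) + (u:ℝ) * ((a:ℝ) + (b:ℝ))) / (n:ℝ)^2 else 0) = 0 := by
    split
    · rename_i heq
      simp only [Prod.mk.injEq] at heq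
      omega
    · rfl
  rw [e1, e2, e3, e4, e5]
  norm_num

lemma wprod_nonneg (hn : 2 ≤ n) (hp0 : 0 ≤ p) (hp1 : p ≤ 1) (seq : ℕ → ℕ × ℕ × ℕ)
    (h0 : (seq 0).1 + (seq 0).2.1 + (seq 0).2.2 = n) :
    ∀ t, 0 ≤ wprod n p t seq ∧
      ((seq t).1 + (seq t).2.1 + (seq t).2.2 = n ∨ wprod n p t seq = 0) := by
  intro t
  induction t with
  | zero => exact ⟨by simp [wprod], Or.inl h0⟩
  | succ t ih =>
    have hstep : wprod n p (t+1) seq = wprod n p t seq * usdStep n p (seq t) (seq (t+1)) := by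
      unfold wprod
      rw [Finset.prod_range_succ]
    rcases ih.2 with hv | hz
    · constructor
      · rw [hstep]
        exact mul_nonneg ih.1 (usdStep_nonneg hn hp0 hp1 hv _)
      · by_cases hv' : (seq (t+1)).1 + (seq (t+1)).2.1 + (seq (t+1)).2.2 = n
        · exact Or.inl hv'
        · right
          rw [hstep, usdStep_zero_invalid hp0 hv hv', mul_zero]
    · rw [hstep, hz, zero_mul]
      exact ⟨le_rfl, Or.inr rfl⟩

open scoped ENNReal in
lemma five (hn : 2 ≤ n) (hp0 : 0 ≤ p) (hp1 : p ≤ 1) {a b u : ℕ} (hc : a + b + u = n)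
    (H : ℕ × ℕ × ℕ → ℝ) (hH : ∀ d : ℕ × ℕ × ℕ, d.1 + d.2.1 + d.2.2 = n → 0 ≤ H d) :
    ∑' d : ℕ × ℕ × ℕ, ENNReal.ofReal (usdStep n p (a, b, u) d * H d)
      = ENNReal.ofReal ((1 - p) * (a:ℝ) * (b:ℝ) / (n:ℝ)^2 * H (a - 1, b, u + 1) +
          (a:ℝ) * (b:ℝ) / (n:ℝ)^2 * H (a, b - 1, u + 1) +
          (u:ℝ) * (a:ℝ) / (n:ℝ)^2 * H (a + 1, b, u - 1) +
          (u:ℝ) * (b:ℝ) / (n:ℝ)^2 * H (a, b + 1, u - 1) +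
          r5 n p (a, b, u) * H (a, b, u)) := by
  classical
  have h2 := npos hn
  have hq : (0:ℝ) ≤ 1 - p := by linarith
  have hr5 : 0 ≤ r5 n p (a, b, u) := r5_nonneg hn hp0 a b u hc
  -- nonnegativity of the five products
  have N1 : 0 ≤ (1 - p) * (a:ℝ) * (b:ℝ) / (n:ℝ)^2 * H (a - 1, b, u + 1) := by
    rcases Nat.eq_zero_or_pos a with h | h
    · simp [h]
    · have := hH (a - 1, b, u + 1) (by dsimp only; omega)
      positivity
  have N2 : 0 ≤ (a:ℝ) * (b:ℝ) / (n:ℝ)^2 * H (a, b - 1, u + 1) := by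
    rcases Nat.eq_zero_or_pos b with h | h
    · simp [h]
    · have := hH (a, b - 1, u + 1) (by dsimp only; omega)
      positivity
  have N3 : 0 ≤ (u:ℝ) * (a:ℝ) / (n:ℝ)^2 * H (a + 1, b, u - 1) := by
    rcases Nat.eq_zero_or_pos u with h | h
    · simp [h]
    · have := hH (a + 1, b, u - 1) (by dsimp only; omega)
      positivity
  have N4 : 0 ≤ (u:ℝ) * (b:ℝ) / (n:ℝ)^2 * H (a, b + 1, u - 1) := by
    rcases Nat.eq_zero_or_pos u with h | h
    · simp [h]
    · have := hH (a, b + 1, u - 1) (by dsimp only; omega)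
      positivity
  have N5 : 0 ≤ r5 n p (a, b, u) * H (a, b, u) := by
    have := hH (a, b, u) (by dsimp only; omega)
    positivity
  have key : ∀ d : ℕ × ℕ × ℕ, ENNReal.ofReal (usdStep n p (a, b, u) d * H d) =
      (if d = (a - 1, b, u + 1) then
        ENNReal.ofReal ((1 - p) * (a:ℝ) * (b:ℝ) / (n:ℝ)^2 * H (a - 1, b, u + 1)) else 0) +
      (if d = (a, b - 1, u + 1) then
        ENNReal.ofReal ((a:ℝ) * (b:ℝ) / (n:ℝ)^2 * H (a, b - 1, u + 1)) else 0) +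
      (if d = (a + 1, b, u - 1) then
        ENNReal.ofReal ((u:ℝ) * (a:ℝ) / (n:ℝ)^2 * H (a + 1, b, u - 1)) else 0) +
      (if d = (a, b + 1, u - 1) then
        ENNReal.ofReal ((u:ℝ) * (b:ℝ) / (n:ℝ)^2 * H (a, b + 1, u - 1)) else 0) +
      (if d = (a, b, u) then
        ENNReal.ofReal (r5 n p (a, b, u) * H (a, b, u)) else 0) := by
    intro d
    have hus : usdStep n p (a, b, u) d * H d =
        (if d = (a - 1, b, u + 1) then (1 - p) * (a:ℝ) * (b:ℝ) / (n:ℝ)^2 * H (a - 1, b, u + 1) else 0) +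
        (if d = (a, b - 1, u + 1) then (a:ℝ) * (b:ℝ) / (n:ℝ)^2 * H (a, b - 1, u + 1) else 0) +
        (if d = (a + 1, b, u - 1) then (u:ℝ) * (a:ℝ) / (n:ℝ)^2 * H (a + 1, b, u - 1) else 0) +
        (if d = (a, b + 1, u - 1) then (u:ℝ) * (b:ℝ) / (n:ℝ)^2 * H (a, b + 1, u - 1) else 0) +
        (if d = (a, b, u) then r5 n p (a, b, u) * H (a, b, u) else 0) := by
      unfold usdStep r5
      dsimp only
      rw [add_mul, add_mul, add_mul, add_mul]
      congr 1
      · congr 1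
        · congr 1
          · congr 1
            · rw [ite_mul, zero_mul]
              split
              · rename_i hd; rw [hd]
              · rfl
            · rw [ite_mul, zero_mul]
              split
              · rename_i hd; rw [hd]
              · rfl
          · rw [ite_mul, zero_mul]
            split
            · rename_i hd; rw [hd]
            · rfl
        · rw [ite_mul, zero_mul]
          split
          · rename_i hd; rw [hd]
          · rfl
      · rw [ite_mul, zero_mul]
        split
        · rename_i hd; rw [hd]
        · rfl
    rw [hus]
    have ite_nn : ∀ (P : Prop) [Decidable P] (x : ℝ), 0 ≤ x → 0 ≤ (if P then x else 0) := by
      intro P _ x hx; split <;> simp [hx]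
    rw [ENNReal.ofReal_add (by
        have := ite_nn (d = (a - 1, b, u + 1)) _ N1
        have := ite_nn (d = (a, b - 1, u + 1)) _ N2
        have := ite_nn (d = (a + 1, b, u - 1)) _ N3
        have := ite_nn (d = (a, b + 1, u - 1)) _ N4
        linarith) (ite_nn (d = (a, b, u)) _ N5),
      ENNReal.ofReal_add (by
        have := ite_nn (d = (a - 1, b, u + 1)) _ N1
        have := ite_nn (d = (a, b - 1, u + 1)) _ N2
        have := ite_nn (d = (a + 1, b, u - 1)) _ N3
        linarith) (ite_nn (d = (a, b + 1, u - 1)) _ N4),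
      ENNReal.ofReal_add (by
        have := ite_nn (d = (a - 1, b, u + 1)) _ N1
        have := ite_nn (d = (a, b - 1, u + 1)) _ N2
        linarith) (ite_nn (d = (a + 1, b, u - 1)) _ N3),
      ENNReal.ofReal_add (ite_nn (d = (a - 1, b, u + 1)) _ N1) (ite_nn (d = (a, b - 1, u + 1)) _ N2)]
    congr 1
    · congr 1
      · congr 1
        · congr 1 <;> [skip; skip]
          all_goals (rw [apply_ite ENNReal.ofReal, ENNReal.ofReal_zero])
        · rw [apply_ite ENNReal.ofReal, ENNReal.ofReal_zero]
      · rw [apply_ite ENNReal.ofReal, ENNReal.ofReal_zero]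
    · rw [apply_ite ENNReal.ofReal, ENNReal.ofReal_zero]
  calc ∑' d : ℕ × ℕ × ℕ, ENNReal.ofReal (usdStep n p (a, b, u) d * H d)
      = ∑' d : ℕ × ℕ × ℕ, ((if d = (a - 1, b, u + 1) then
            ENNReal.ofReal ((1 - p) * (a:ℝ) * (b:ℝ) / (n:ℝ)^2 * H (a - 1, b, u + 1)) else 0) +
          (if d = (a, b - 1, u + 1) then
            ENNReal.ofReal ((a:ℝ) * (b:ℝ) / (n:ℝ)^2 * H (a, b - 1, u + 1)) else 0) +
          (if d = (a + 1, b, u - 1) then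
            ENNReal.ofReal ((u:ℝ) * (a:ℝ) / (n:ℝ)^2 * H (a + 1, b, u - 1)) else 0) +
          (if d = (a, b + 1, u - 1) then
            ENNReal.ofReal ((u:ℝ) * (b:ℝ) / (n:ℝ)^2 * H (a, b + 1, u - 1)) else 0) +
          (if d = (a, b, u) then
            ENNReal.ofReal (r5 n p (a, b, u) * H (a, b, u)) else 0)) := tsum_congr key
    _ = ENNReal.ofReal ((1 - p) * (a:ℝ) * (b:ℝ) / (n:ℝ)^2 * H (a - 1, b, u + 1)) +
        ENNReal.ofReal ((a:ℝ) * (b:ℝ) / (n:ℝ)^2 * H (a, b - 1, u + 1)) +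
        ENNReal.ofReal ((u:ℝ) * (a:ℝ) / (n:ℝ)^2 * H (a + 1, b, u - 1)) +
        ENNReal.ofReal ((u:ℝ) * (b:ℝ) / (n:ℝ)^2 * H (a, b + 1, u - 1)) +
        ENNReal.ofReal (r5 n p (a, b, u) * H (a, b, u)) := by
        rw [ENNReal.tsum_add, ENNReal.tsum_add, ENNReal.tsum_add, ENNReal.tsum_add]
        congr 1
        · congr 1
          · congr 1
            · congr 1
              · exact (tsum_eq_single _ (fun d hd => if_neg hd)).trans (if_pos rfl)
              · exact (tsum_eq_single _ (fun d hd => if_neg hd)).trans (if_pos rfl)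
            · exact (tsum_eq_single _ (fun d hd => if_neg hd)).trans (if_pos rfl)
          · exact (tsum_eq_single _ (fun d hd => if_neg hd)).trans (if_pos rfl)
        · exact (tsum_eq_single _ (fun d hd => if_neg hd)).trans (if_pos rfl)
    _ = _ := by
        rw [← ENNReal.ofReal_add N1 N2, ← ENNReal.ofReal_add (by linarith) N3,
          ← ENNReal.ofReal_add (by linarith) N4, ← ENNReal.ofReal_add (by linarith) N5]

open scoped ENNReal in
lemma step_sum (hn : 2 ≤ n) (hp0 : 0 ≤ p) (hp1 : p ≤ 1) {a b u : ℕ} (hc : a + b + u = n) :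
    ∑' d : ℕ × ℕ × ℕ, ENNReal.ofReal (usdStep n p (a, b, u) d) = 1 := by
  have h := five hn hp0 hp1 hc (fun _ => 1) (fun _ _ => zero_le_one)
  simp only [mul_one] at h
  rw [h]
  have hs := rsum hn p (a, b, u)
  dsimp only at hs
  rw [hs, ENNReal.ofReal_one]

open scoped ENNReal in
lemma group {t : ℕ} (F : (Fin (t+1) → ℕ × ℕ × ℕ) → ℝ≥0∞) :
    ∑' v, F v = ∑' (d : ℕ × ℕ × ℕ), ∑' v, if v 0 = d then F v else 0 := by
  classical
  have hpt : ∀ v : Fin (t+1) → ℕ × ℕ × ℕ, F v = ∑' d : ℕ × ℕ × ℕ, if v 0 = d then F v else 0 := by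
    intro v
    rw [tsum_eq_single (v 0) (fun d hd => if_neg (Ne.symm hd)), if_pos rfl]
  calc ∑' v, F v = ∑' v, ∑' d : ℕ × ℕ × ℕ, if v 0 = d then F v else 0 := tsum_congr hpt
    _ = ∑' (d : ℕ × ℕ × ℕ), ∑' v, if v 0 = d then F v else 0 := ENNReal.tsum_comm

open scoped ENNReal in
lemma wseq_cons (c : ℕ × ℕ × ℕ) (t : ℕ) (s0 : ℕ × ℕ × ℕ) (v' : Fin (t+1) → ℕ × ℕ × ℕ) :
    wseq n p c (t+1) (ext' (t+1) (Fin.cons s0 v')) =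
      (if s0 = c then (1:ℝ) else 0) * (usdStep n p s0 (v' 0) * wprod n p t (ext' t v')) := by
  have htail : (fun j : Fin (t+1) => (Fin.cons s0 v' : Fin (t+2) → ℕ × ℕ × ℕ) j.succ) = v' :=
    funext fun j => by simp
  have hE : ∀ i : ℕ, ext' (t+1) (Fin.cons s0 v') (i+1) = ext' t v' i := by
    intro i
    rw [ext'_succ, htail]
  unfold wseq wprod
  congr 1
  rw [Finset.prod_range_succ', mul_comm]
  congr 1
  apply Finset.prod_congr rfl
  intro i _
  rw [hE i, hE (i+1)]

open Classical in
open scoped ENNReal in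
lemma main_sums (hn : 2 ≤ n) (hp0 : 0 ≤ p) (hp1 : p ≤ 1) :
    ∀ (t : ℕ) (c : ℕ × ℕ × ℕ), c.1 + c.2.1 + c.2.2 = n →
      (∑' v : Fin (t+1) → ℕ × ℕ × ℕ, ENNReal.ofReal (wseq n p c t (ext' t v))) = 1 ∧
      (∑' v : Fin (t+1) → ℕ × ℕ × ℕ,
          if HitF n t v then ENNReal.ofReal (wseq n p c t (ext' t v)) else 0)
        = ENNReal.ofReal (hfun n p t c) := by
  intro t
  induction t with
  | zero =>
    intro c hc
    have hval : ∀ v : Fin 1 → ℕ × ℕ × ℕ,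
        ENNReal.ofReal (wseq n p c 0 (ext' 0 v)) = if v 0 = c then 1 else 0 := by
      intro v
      unfold wseq wprod
      rw [Finset.prod_range_zero, mul_one, ext'_zero]
      split <;> simp
    have hT : (∑' v : Fin 1 → ℕ × ℕ × ℕ, ENNReal.ofReal (wseq n p c 0 (ext' 0 v))) = 1 := by
      rw [tsum_congr hval, tsum_eq_single (fun _ => c) ?_, if_pos rfl]
      intro v hv
      rw [if_neg]
      intro h0
      apply hv
      funext i
      have hi : i = 0 := Fin.ext (Nat.lt_one_iff.mp i.isLt)
      rw [hi, h0]
    refine ⟨hT, ?_⟩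
    by_cases hcn : c.1 = n
    · have heq : ∀ v : Fin 1 → ℕ × ℕ × ℕ,
          (if HitF n 0 v then ENNReal.ofReal (wseq n p c 0 (ext' 0 v)) else 0)
            = ENNReal.ofReal (wseq n p c 0 (ext' 0 v)) := by
        intro v
        split
        · rfl
        · rename_i hno
          have hv0 : v 0 ≠ c := fun h => hno ⟨0, by rw [h]; exact hcn⟩
          unfold wseq
          rw [ext'_zero, if_neg hv0, zero_mul, ENNReal.ofReal_zero]
      rw [tsum_congr heq, hT, hfun_zero, if_pos hcn, ENNReal.ofReal_one]
    · have heq : ∀ v : Fin 1 → ℕ × ℕ × ℕ,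
          (if HitF n 0 v then ENNReal.ofReal (wseq n p c 0 (ext' 0 v)) else 0) = 0 := by
        intro v
        split
        · rename_i hh
          obtain ⟨i, hi⟩ := hh
          have h0 : i = (0 : Fin 1) := Fin.ext (Nat.lt_one_iff.mp i.isLt)
          rw [h0] at hi
          have hv0 : v 0 ≠ c := fun h => hcn (h ▸ hi)
          unfold wseq
          rw [ext'_zero, if_neg hv0, zero_mul, ENNReal.ofReal_zero]
        · rfl
      rw [tsum_congr heq, tsum_zero, hfun_zero, if_neg hcn, ENNReal.ofReal_zero]
  | succ t ih =>
    intro c hc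
    have hsplit : ∀ F : (Fin (t+2) → ℕ × ℕ × ℕ) → ℝ≥0∞,
        ∑' v : Fin (t+2) → ℕ × ℕ × ℕ, F v
          = ∑' (s0 : ℕ × ℕ × ℕ), ∑' v' : Fin (t+1) → ℕ × ℕ × ℕ, F (Fin.cons s0 v') := by
      intro F
      rw [← (Fin.consEquiv (fun _ : Fin (t+2) => ℕ × ℕ × ℕ)).tsum_eq F]
      exact ENNReal.tsum_prod'
    have hT : (∑' v : Fin (t+2) → ℕ × ℕ × ℕ,
        ENNReal.ofReal (wseq n p c (t+1) (ext' (t+1) v))) = 1 := by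
      rw [hsplit]
      have hz : ∀ s0 : ℕ × ℕ × ℕ, s0 ≠ c →
          (∑' v' : Fin (t+1) → ℕ × ℕ × ℕ,
            ENNReal.ofReal (wseq n p c (t+1) (ext' (t+1) (Fin.cons s0 v')))) = 0 := by
        intro s0 hs0
        have hzz : ∀ v' : Fin (t+1) → ℕ × ℕ × ℕ,
            ENNReal.ofReal (wseq n p c (t+1) (ext' (t+1) (Fin.cons s0 v'))) = 0 := by
          intro v'
          rw [wseq_cons, if_neg hs0, zero_mul, ENNReal.ofReal_zero]
        rw [tsum_congr hzz, tsum_zero]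
      rw [tsum_eq_single c hz]
      have hstep1 : ∀ v' : Fin (t+1) → ℕ × ℕ × ℕ,
          ENNReal.ofReal (wseq n p c (t+1) (ext' (t+1) (Fin.cons c v')))
            = ENNReal.ofReal (usdStep n p c (v' 0) * wprod n p t (ext' t v')) := by
        intro v'
        rw [wseq_cons, if_pos rfl, one_mul]
      rw [tsum_congr hstep1,
        group (fun v' => ENNReal.ofReal (usdStep n p c (v' 0) * wprod n p t (ext' t v')))]
      have hinner : ∀ d : ℕ × ℕ × ℕ,
          (∑' v' : Fin (t+1) → ℕ × ℕ × ℕ, if v' 0 = d then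
              ENNReal.ofReal (usdStep n p c (v' 0) * wprod n p t (ext' t v')) else 0)
            = ENNReal.ofReal (usdStep n p c d) *
              (∑' v' : Fin (t+1) → ℕ × ℕ × ℕ, ENNReal.ofReal (wseq n p d t (ext' t v'))) := by
        intro d
        rw [← ENNReal.tsum_mul_left]
        apply tsum_congr
        intro v'
        by_cases hvd : v' 0 = d
        · rw [if_pos hvd, hvd]
          have hws : wseq n p d t (ext' t v') = wprod n p t (ext' t v') := by
            unfold wseq
            rw [ext'_zero, if_pos hvd, one_mul]
          rw [hws]
          exact ENNReal.ofReal_mul (usdStep_nonneg hn hp0 hp1 hc d)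
        · rw [if_neg hvd]
          have hws : wseq n p d t (ext' t v') = 0 := by
            unfold wseq
            rw [ext'_zero, if_neg hvd, zero_mul]
          rw [hws, ENNReal.ofReal_zero, mul_zero]
      rw [tsum_congr hinner]
      have hfinal : ∀ d : ℕ × ℕ × ℕ,
          ENNReal.ofReal (usdStep n p c d) *
            (∑' v' : Fin (t+1) → ℕ × ℕ × ℕ, ENNReal.ofReal (wseq n p d t (ext' t v')))
          = ENNReal.ofReal (usdStep n p c d) := by
        intro d
        by_cases hvalid : d.1 + d.2.1 + d.2.2 = n
        · rw [(ih d hvalid).1, mul_one]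
        · rw [usdStep_zero_invalid hp0 hc hvalid, ENNReal.ofReal_zero, zero_mul]
      rw [tsum_congr hfinal]
      obtain ⟨a, b, u⟩ := c
      exact step_sum hn hp0 hp1 hc
    refine ⟨hT, ?_⟩
    by_cases hcn : c.1 = n
    · have heq : ∀ v : Fin (t+2) → ℕ × ℕ × ℕ,
          (if HitF n (t+1) v then ENNReal.ofReal (wseq n p c (t+1) (ext' (t+1) v)) else 0)
            = ENNReal.ofReal (wseq n p c (t+1) (ext' (t+1) v)) := by
        intro v
        split
        · rfl
        · rename_i hno
          have hv0 : v 0 ≠ c := fun h => hno ⟨0, by rw [h]; exact hcn⟩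
          unfold wseq
          rw [ext'_zero, if_neg hv0, zero_mul, ENNReal.ofReal_zero]
      rw [tsum_congr heq, hT, hfun_succ, if_pos hcn, ENNReal.ofReal_one]
    · rw [hsplit]
      have hz : ∀ s0 : ℕ × ℕ × ℕ, s0 ≠ c →
          (∑' v' : Fin (t+1) → ℕ × ℕ × ℕ, if HitF n (t+1) (Fin.cons s0 v') then
            ENNReal.ofReal (wseq n p c (t+1) (ext' (t+1) (Fin.cons s0 v'))) else 0) = 0 := by
        intro s0 hs0
        have hzz : ∀ v' : Fin (t+1) → ℕ × ℕ × ℕ, (if HitF n (t+1) (Fin.cons s0 v') then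
            ENNReal.ofReal (wseq n p c (t+1) (ext' (t+1) (Fin.cons s0 v'))) else 0) = 0 := by
          intro v'
          rw [wseq_cons, if_neg hs0, zero_mul, ENNReal.ofReal_zero, ite_self]
        rw [tsum_congr hzz, tsum_zero]
      rw [tsum_eq_single c hz]
      have hstep1 : ∀ v' : Fin (t+1) → ℕ × ℕ × ℕ,
          (if HitF n (t+1) (Fin.cons c v') then
            ENNReal.ofReal (wseq n p c (t+1) (ext' (t+1) (Fin.cons c v'))) else 0)
          = (if HitF n t v' then
              ENNReal.ofReal (usdStep n p c (v' 0) * wprod n p t (ext' t v')) else 0) := by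
        intro v'
        rw [wseq_cons, if_pos rfl, one_mul]
        have hcond : HitF n (t+1) (Fin.cons c v') ↔ HitF n t v' := by
          rw [hitF_cons]
          exact or_iff_right hcn
        exact if_congr hcond rfl rfl
      rw [tsum_congr hstep1,
        group (fun v' => if HitF n t v' then
          ENNReal.ofReal (usdStep n p c (v' 0) * wprod n p t (ext' t v')) else 0)]
      have hinner : ∀ d : ℕ × ℕ × ℕ,
          (∑' v' : Fin (t+1) → ℕ × ℕ × ℕ, if v' 0 = d then
              (if HitF n t v' then
                ENNReal.ofReal (usdStep n p c (v' 0) * wprod n p t (ext' t v')) else 0) else 0)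
            = ENNReal.ofReal (usdStep n p c d) *
              (∑' v' : Fin (t+1) → ℕ × ℕ × ℕ, if HitF n t v' then
                ENNReal.ofReal (wseq n p d t (ext' t v')) else 0) := by
        intro d
        rw [← ENNReal.tsum_mul_left]
        apply tsum_congr
        intro v'
        by_cases hvd : v' 0 = d
        · rw [if_pos hvd]
          by_cases hhit : HitF n t v'
          · rw [if_pos hhit, if_pos hhit, hvd]
            have hws : wseq n p d t (ext' t v') = wprod n p t (ext' t v') := by
              unfold wseq
              rw [ext'_zero, if_pos hvd, one_mul]
            rw [hws]
            exact ENNReal.ofReal_mul (usdStep_nonneg hn hp0 hp1 hc d)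
          · rw [if_neg hhit, if_neg hhit, mul_zero]
        · rw [if_neg hvd]
          by_cases hhit : HitF n t v'
          · rw [if_pos hhit]
            have hws : wseq n p d t (ext' t v') = 0 := by
              unfold wseq
              rw [ext'_zero, if_neg hvd, zero_mul]
            rw [hws, ENNReal.ofReal_zero, mul_zero]
          · rw [if_neg hhit, mul_zero]
      rw [tsum_congr hinner]
      have hfinal : ∀ d : ℕ × ℕ × ℕ,
          ENNReal.ofReal (usdStep n p c d) *
            (∑' v' : Fin (t+1) → ℕ × ℕ × ℕ, if HitF n t v' then
              ENNReal.ofReal (wseq n p d t (ext' t v')) else 0)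
          = ENNReal.ofReal (usdStep n p c d * hfun n p t d) := by
        intro d
        by_cases hvalid : d.1 + d.2.1 + d.2.2 = n
        · rw [(ih d hvalid).2, ← ENNReal.ofReal_mul (usdStep_nonneg hn hp0 hp1 hc d)]
        · rw [usdStep_zero_invalid hp0 hc hvalid, ENNReal.ofReal_zero, zero_mul, zero_mul,
            ENNReal.ofReal_zero]
      rw [tsum_congr hfinal]
      obtain ⟨a, b, u⟩ := c
      rw [five hn hp0 hp1 hc (hfun n p t) (fun d hd => by
        obtain ⟨a', b', u'⟩ := d
        exact (hfun_bounds hn hp0 hp1 t a' b' u' hd).1)]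
      congr 1
      rw [hfun_succ]
      dsimp only
      rw [if_neg hcn]

open MeasureTheory in
open Classical in
open scoped ENNReal in
lemma measure_hit (hn : 2 ≤ n) (hp0 : 0 ≤ p) (hp1 : p ≤ 1) (x0 : ℕ × ℕ × ℕ)
    (hx0 : x0.1 + x0.2.1 + x0.2.2 = n) (μ : Measure (ℕ → ℕ × ℕ × ℕ))
    (hμ : IsUSD n p x0 μ) (t : ℕ) :
    μ {ω | ∃ s ≤ t, (ω s).1 = n} = ENNReal.ofReal (hfun n p t x0) := by
  obtain ⟨hprob, hcyl⟩ := hμ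
  set C : (Fin (t+1) → ℕ × ℕ × ℕ) → Set (ℕ → ℕ × ℕ × ℕ) :=
    fun v => {ω | ∀ i ≤ t, ω i = ext' t v i} with hC
  have hCmeas : ∀ v, MeasurableSet (C v) := by
    intro v
    have hre : C v = ⋂ (i : ℕ) (_ : i ≤ t), (fun ω : ℕ → ℕ × ℕ × ℕ => ω i) ⁻¹' {ext' t v i} := by
      ext ω
      simp [hC, Set.mem_iInter]
    rw [hre]
    exact MeasurableSet.iInter fun i => MeasurableSet.iInter fun _ =>
      (measurable_pi_apply i) (measurableSet_singleton _)
  have hunion : {ω : ℕ → ℕ × ℕ × ℕ | ∃ s ≤ t, (ω s).1 = n}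
      = ⋃ v, (if HitF n t v then C v else ∅) := by
    ext ω
    constructor
    · rintro ⟨s, hs, hsn⟩
      refine Set.mem_iUnion.2 ⟨fun i => ω i.val, ?_⟩
      have hHit : HitF n t (fun i : Fin (t+1) => ω i.val) := ⟨⟨s, by omega⟩, hsn⟩
      rw [if_pos hHit]
      intro i hi
      rw [ext'_le hi]
    · intro hω
      obtain ⟨v, hv⟩ := Set.mem_iUnion.1 hω
      by_cases hH : HitF n t v
      · rw [if_pos hH] at hv
        obtain ⟨i, hi⟩ := hH
        refine ⟨i.val, by omega, ?_⟩
        have := hv i.val (by omega)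
        rw [this, ext'_fin]
        exact hi
      · rw [if_neg hH] at hv
        exact absurd hv (Set.notMem_empty ω)
  have hdisj : Pairwise (Function.onFun Disjoint (fun v => if HitF n t v then C v else ∅)) := by
    intro v w hvw
    unfold Function.onFun
    have hCd : Disjoint (C v) (C w) := by
      rw [Set.disjoint_left]
      intro ω hv hw
      apply hvw
      funext i
      have h1 := hv i.val (by omega)
      have h2 := hw i.val (by omega)
      rw [ext'_fin] at h1 h2
      rw [← h1, ← h2]
    simp only
    split <;> split <;> simp [hCd]
  have hmeas' : ∀ v, MeasurableSet (if HitF n t v then C v else ∅) := by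
    intro v
    split
    · exact hCmeas v
    · exact MeasurableSet.empty
  rw [hunion, measure_iUnion hdisj hmeas']
  have hterm : ∀ v : Fin (t+1) → ℕ × ℕ × ℕ,
      μ (if HitF n t v then C v else ∅)
        = (if HitF n t v then ENNReal.ofReal (wseq n p x0 t (ext' t v)) else 0) := by
    intro v
    have hCv : μ (C v) = ENNReal.ofReal (wseq n p x0 t (ext' t v)) := by
      have hfin : μ (C v) ≠ ⊤ := measure_ne_top μ _
      have := hcyl t (ext' t v)
      rw [← ENNReal.ofReal_toReal hfin, this]
      rfl
    split
    · exact hCv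
    · exact measure_empty
  rw [tsum_congr hterm]
  exact (main_sums hn hp0 hp1 t x0 hx0).2

end Paths

end USDAux

/-- If `p̃ ≤ p`, `x̃₁ ≤ x₁` and `x̃₂ ≥ x₂`, then for every `t ≥ 0` the
probability that `USD_p` started from `x` has reached `X₁ = n` by time `t` is at least the
corresponding probability for `USD_p̃` started from `x̃`. -/
theorem stmt_3 (n : ℕ) (hn : 2 ≤ n) (p pt : ℝ)
    (hp : p ∈ Set.Icc (0 : ℝ) 1) (hpt : pt ∈ Set.Icc (0 : ℝ) 1) (hple : pt ≤ p)
    (x xt : ℕ × ℕ × ℕ)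
    (hx : x.1 + x.2.1 + x.2.2 = n) (hxt : xt.1 + xt.2.1 + xt.2.2 = n)
    (h1 : xt.1 ≤ x.1) (h2 : x.2.1 ≤ xt.2.1)
    (μ μt : Measure (ℕ → ℕ × ℕ × ℕ))
    (hμ : IsUSD n p x μ) (hμt : IsUSD n pt xt μt) (t : ℕ) :
    μt {ω | ∃ s ≤ t, (ω s).1 = n} ≤ μ {ω | ∃ s ≤ t, (ω s).1 = n} := by
  obtain ⟨hp0, hp1⟩ := hp
  obtain ⟨hpt0, hpt1⟩ := hpt
  rw [USDAux.measure_hit hn hp0 hp1 x hx μ hμ t,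
    USDAux.measure_hit hn hpt0 hpt1 xt hxt μt hμt t]
  exact ENNReal.ofReal_le_ofReal
    (USDAux.hfun_mono hn hp0 hp1 hpt0 hple x xt hx hxt h1 h2 t)
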